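/- For an infinite cardinal α, an ideal I on an arc-connected space X, and any two points a, b ∈ X, the subgroups 𝔓ᵅ_I(X,a) ≤ π₁(X,a) and 𝔓ᵅ_I(X,b) ≤ π₁(X,b) generated by homotopy classes of α-I-loops are isomorphic; an isomorphism is given by [g] ↦ [f̄ * g * f], where f : [0,1] → X is a continuous injective path from a to b. -/

import Mathlib

/-- `I` is an ideal on `X`. -/
def IsIdealOn {X : Type*} (I : Set (Set X)) : Prop :=
  I.Nonempty ∧ (∀ A ∈ I, ∀ B ∈ I, A ∪ B ∈ I) ∧ (∀ A ∈ I, ∀ B, B ⊆ A → B ∈ I)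

/-- The homotopy class of a loop, as an element of the fundamental group. -/
noncomputable def loopClass {X : Type*} [TopologicalSpace X] {a : X} (f : Path a a) :
    FundamentalGroup X a :=
  @FundamentalGroup.fromPath X _ a ⟦f⟧

/-- The subgroup `𝔓ᵅ_I(X, a)` of `π₁(X, a)` generated by homotopy classes of α-I-loops
based at `a`. -/
noncomputable def POmega {X : Type*} [TopologicalSpace X] (α : Cardinal) (I : Set (Set X))
    (a : X) : Subgroup (FundamentalGroup X a) :=
  Subgroup.closure {p | ∃ f : Path a a,
    (∃ A ∈ I, ∀ x ∉ A, Cardinal.mk ((⇑f) ⁻¹' {x}) < α) ∧ loopClass f = p}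

open Cardinal in
lemma trans_preimage_card_lt {X : Type*} [TopologicalSpace X] {α : Cardinal}
    (hα : Cardinal.aleph0 ≤ α) {a b c : X} (p : Path a b) (q : Path b c) (x : X)
    (hp : Cardinal.mk ((⇑p) ⁻¹' {x}) < α) (hq : Cardinal.mk ((⇑q) ⁻¹' {x}) < α) :
    Cardinal.mk ((⇑(p.trans q)) ⁻¹' {x}) < α := by
  set σ : unitInterval → unitInterval := fun u =>
    ⟨(u : ℝ) / 2, by constructor <;> nlinarith [u.2.1, u.2.2]⟩ with hσ
  set τ : unitInterval → unitInterval := fun u =>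
    ⟨((u : ℝ) + 1) / 2, by constructor <;> nlinarith [u.2.1, u.2.2]⟩ with hτ
  have hsub : (⇑(p.trans q)) ⁻¹' {x} ⊆ σ '' ((⇑p) ⁻¹' {x}) ∪ τ '' ((⇑q) ⁻¹' {x}) := by
    intro t ht
    simp only [Set.mem_preimage, Set.mem_singleton_iff, Path.trans_apply] at ht
    by_cases h : (t : ℝ) ≤ 1 / 2
    · rw [dif_pos h] at ht
      left
      refine ⟨_, ht, ?_⟩
      apply Subtype.ext
      show (2 * (t : ℝ)) / 2 = (t : ℝ)
      ring
    · rw [dif_neg h] at ht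
      right
      refine ⟨_, ht, ?_⟩
      apply Subtype.ext
      show ((2 * (t : ℝ) - 1) + 1) / 2 = (t : ℝ)
      ring
  calc Cardinal.mk ((⇑(p.trans q)) ⁻¹' {x})
      ≤ Cardinal.mk ((σ '' ((⇑p) ⁻¹' {x}) ∪ τ '' ((⇑q) ⁻¹' {x}) : Set unitInterval)) :=
        mk_le_mk_of_subset hsub
    _ ≤ Cardinal.mk (σ '' ((⇑p) ⁻¹' {x})) + Cardinal.mk (τ '' ((⇑q) ⁻¹' {x})) :=
        mk_union_le _ _
    _ ≤ Cardinal.mk ((⇑p) ⁻¹' {x}) + Cardinal.mk ((⇑q) ⁻¹' {x}) :=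
        add_le_add mk_image_le mk_image_le
    _ < α := Cardinal.add_lt_of_lt hα hp hq

lemma inj_preimage_card_lt {X : Type*} [TopologicalSpace X] {α : Cardinal}
    (hα : Cardinal.aleph0 ≤ α) {a b : X} (p : Path a b) (hp : Function.Injective ⇑p) (x : X) :
    Cardinal.mk ((⇑p) ⁻¹' {x}) < α := by
  have hsub : ((⇑p) ⁻¹' {x}).Subsingleton := by
    intro u hu v hv
    exact hp (hu.trans hv.symm)
  exact lt_of_le_of_lt hsub.cardinalMk_le_one (lt_of_lt_of_le Cardinal.one_lt_aleph0 hα)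

lemma path_symm_injective {X : Type*} [TopologicalSpace X] {a b : X} {p : Path a b}
    (hp : Function.Injective ⇑p) : Function.Injective ⇑p.symm := by
  intro u v huv
  have h1 : p (unitInterval.symm u) = p (unitInterval.symm v) := huv
  have h2 := hp h1
  have := congrArg unitInterval.symm h2
  simpa using this

open CategoryTheory in
lemma conj_loopClass {X : Type*} [TopologicalSpace X] {a b : X} (f : Path a b)
    (g : Path a a) :
    FundamentalGroup.fundamentalGroupMulEquivOfPath f (loopClass g) =
      loopClass ((f.symm.trans g).trans f) := by
  letI := Path.Homotopic.setoid (X := X)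
  delta FundamentalGroup.fundamentalGroupMulEquivOfPath
  rw [Iso.conj_apply, ← Category.assoc]
  rfl

open CategoryTheory in
lemma conj_loopClass_symm {X : Type*} [TopologicalSpace X] {a b : X} (f : Path a b)
    (g : Path b b) :
    (FundamentalGroup.fundamentalGroupMulEquivOfPath f).symm (loopClass g) =
      loopClass ((f.trans g).trans f.symm) := by
  letI := Path.Homotopic.setoid (X := X)
  delta FundamentalGroup.fundamentalGroupMulEquivOfPath
  change (⟦f⟧ : FundamentalGroupoid.mk a ⟶ FundamentalGroupoid.mk b) ≫ loopClass g ≫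
    Groupoid.inv (⟦f⟧ : FundamentalGroupoid.mk a ⟶ FundamentalGroupoid.mk b) = _
  refine (Category.assoc _ _ _).symm.trans ?_
  rfl

/-- For an infinite cardinal `α`, an ideal `I` on an arc-connected space `X`, and points
`a, b ∈ X`, the subgroups `𝔓ᵅ_I(X,a)` and `𝔓ᵅ_I(X,b)` are isomorphic, via
`[g] ↦ [f̄ * g * f]` for a continuous injective path `f` from `a` to `b`. -/
theorem stmt3 {X : Type*} [TopologicalSpace X] (α : Cardinal) (hα : Cardinal.aleph0 ≤ α)
    (I : Set (Set X)) (hI : IsIdealOn I)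
    (harc : ∀ p q : X, p ≠ q → ∃ γ : Path p q, Function.Injective γ)
    (a b : X) (f : Path a b) (hf : Function.Injective f) :
    ∃ e : POmega α I a ≃* POmega α I b,
      ∀ (g : Path a a) (hg : loopClass g ∈ POmega α I a),
        (e ⟨loopClass g, hg⟩ : FundamentalGroup X b) =
          loopClass ((f.symm.trans g).trans f) := by
  classical
  set φ := FundamentalGroup.fundamentalGroupMulEquivOfPath (X := X) f with hφ
  -- the conjugate of an α-I-small loop along an injective path is α-I-small
  have key : ∀ {c d : X} (h : Path c d), Function.Injective ⇑h → ∀ g : Path c c,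
      (∃ A ∈ I, ∀ x ∉ A, Cardinal.mk ((⇑g) ⁻¹' {x}) < α) →
      (∃ A ∈ I, ∀ x ∉ A, Cardinal.mk ((⇑((h.symm.trans g).trans h)) ⁻¹' {x}) < α) := by
    rintro c d h hinj g ⟨A, hA, hcard⟩
    refine ⟨A, hA, fun x hx => ?_⟩
    exact trans_preimage_card_lt hα _ _ _
      (trans_preimage_card_lt hα _ _ _
        (inj_preimage_card_lt hα _ (path_symm_injective hinj) x) (hcard x hx))
      (inj_preimage_card_lt hα _ hinj x)
  have hmap : (POmega α I a).map (φ : FundamentalGroup X a →* FundamentalGroup X b) =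
      POmega α I b := by
    show ((Subgroup.closure _).map _) = Subgroup.closure _
    rw [MonoidHom.map_closure]
    apply le_antisymm
    · apply (Subgroup.closure_le _).mpr
      rintro _ ⟨p, ⟨g, hgprop, rfl⟩, rfl⟩
      apply Subgroup.subset_closure
      exact ⟨(f.symm.trans g).trans f, key f hf g hgprop, (conj_loopClass f g).symm⟩
    · apply (Subgroup.closure_le _).mpr
      rintro _ ⟨g, hgprop, rfl⟩
      apply Subgroup.subset_closure
      have hprop := key f.symm (path_symm_injective hf) g hgprop
      rw [Path.symm_symm] at hprop
      refine ⟨loopClass ((f.trans g).trans f.symm),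
        ⟨(f.trans g).trans f.symm, hprop, rfl⟩, ?_⟩
      show φ _ = _
      rw [← conj_loopClass_symm f g, MulEquiv.apply_symm_apply]
  refine ⟨(φ.subgroupMap (POmega α I a)).trans (MulEquiv.subgroupCongr hmap), ?_⟩
  intro g hg
  rw [MulEquiv.trans_apply, MulEquiv.subgroupCongr_apply, MulEquiv.coe_subgroupMap_apply]
  exact conj_loopClass f g
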